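/- Let F : ℝ → ℝ be nondecreasing and right-continuous and satisfy the second-order Pareto tail condition with parameters (α, ρ, c, d), and define Q(q) = inf{ y ∈ ℝ : F(y) ≥ q } for q ∈ (0, 1). Let (t_n) be any sequence of reals with t_n → ∞ and (q_n) any sequence in (0,1) with q_n → 1. Then the Pareto-extrapolated quantile is relatively consistent: t_n · ( (1 − F(t_n)) / (1 − q_n) )^(1/α) / Q(q_n) → 1 as n → ∞. -/

import Mathlib

open Filter MeasureTheory Real Set

/-- Second-order Pareto tail condition with parameters `(α, ρ, c, d)`. -/
def ParetoTail (F : ℝ → ℝ) (α ρ c d : ℝ) : Prop :=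
  0 < α ∧ 0 < ρ ∧ 0 < c ∧
  ∃ y₀ : ℝ, 0 < y₀ ∧ ∃ e : ℝ → ℝ,
    Tendsto (fun y : ℝ => y ^ ρ * e y) atTop (nhds 0) ∧
    ∀ y : ℝ, y₀ ≤ y → 1 - F y = c * y ^ (-α) * (1 + d * y ^ (-ρ) + e y)

/-- Relative consistency of the Pareto-extrapolated quantile: if `F` is nondecreasing,
right-continuous, satisfies the second-order Pareto tail condition, `Q q = inf {y | F y ≥ q}`,
`t n → ∞` and `q n ∈ (0,1)` with `q n → 1`, then
`t n * ((1 - F (t n))/(1 - q n))^(1/α) / Q (q n) → 1`. -/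
theorem statement13 (F : ℝ → ℝ) (α ρ c d : ℝ) (hF : ParetoTail F α ρ c d)
    (hmono : Monotone F) (hrc : ∀ x : ℝ, ContinuousWithinAt F (Set.Ici x) x)
    (t q : ℕ → ℝ) (ht : Tendsto t atTop atTop)
    (hq : ∀ n : ℕ, q n ∈ Set.Ioo (0 : ℝ) 1) (hq1 : Tendsto q atTop (nhds 1)) :
    Tendsto (fun n : ℕ =>
        t n * ((1 - F (t n)) / (1 - q n)) ^ (1 / α) / sInf {y : ℝ | q n ≤ F y})
      atTop (nhds 1) := by
  obtain ⟨hα, hρ, hc, y₀, hy₀, e, he, hFeq⟩ := hF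
  set u : ℝ → ℝ := fun y => 1 + d * y ^ (-ρ) + e y with hudef
  set Q : ℕ → ℝ := fun n => sInf {y : ℝ | q n ≤ F y} with hQdef
  have hs_pos : ∀ n, 0 < 1 - q n := fun n => by have := (hq n).2; linarith
  have hFu : ∀ y, y₀ ≤ y → 1 - F y = c * y ^ (-α) * u y := fun y hy => hFeq y hy
  -- u tends to 1 at infinity
  have he0 : Tendsto e atTop (nhds 0) := by
    have h1 : Tendsto (fun y : ℝ => (y ^ ρ * e y) * y ^ (-ρ)) atTop (nhds 0) := by
      simpa using he.mul (tendsto_rpow_neg_atTop hρ)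
    apply h1.congr'
    filter_upwards [eventually_gt_atTop (0:ℝ)] with y hy
    have hne : (y:ℝ) ^ ρ ≠ 0 := (rpow_pos_of_pos hy ρ).ne'
    rw [Real.rpow_neg hy.le]
    field_simp
  have hu1 : Tendsto u atTop (nhds 1) := by
    rw [hudef]
    have h1 : Tendsto (fun y : ℝ => d * y ^ (-ρ)) atTop (nhds 0) := by
      simpa using (tendsto_rpow_neg_atTop hρ).const_mul d
    have := (tendsto_const_nhds (x := (1:ℝ)) (f := atTop)).add (h1.add he0)
    simpa [add_assoc] using this
  -- F tends to 1 at infinity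
  have hF1 : Tendsto F atTop (nhds 1) := by
    have h2 : Tendsto (fun y : ℝ => c * y ^ (-α) * u y) atTop (nhds 0) := by
      simpa using ((tendsto_rpow_neg_atTop hα).const_mul c).mul hu1
    have h1 : Tendsto (fun y : ℝ => 1 - c * y ^ (-α) * u y) atTop (nhds 1) := by
      simpa using (tendsto_const_nhds (x := (1:ℝ)) (f := atTop)).sub h2
    apply h1.congr'
    filter_upwards [eventually_ge_atTop y₀] with y hy
    have := hFu y hy
    linarith
  have hupos : ∀ᶠ y in atTop, 0 < u y :=
    hu1.eventually (eventually_gt_nhds one_pos)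
  have hFlt : ∀ᶠ y in atTop, F y < 1 := by
    filter_upwards [hupos, eventually_ge_atTop y₀, eventually_gt_atTop (0:ℝ)] with y h1 h2 h3
    have h4 := hFu y h2
    nlinarith [mul_pos (mul_pos hc (rpow_pos_of_pos h3 (-α))) h1]
  have hexY : ∀ M : ℝ, ∃ Y, M ≤ Y ∧ F Y < 1 := fun M => by
    obtain ⟨Y, h1, h2⟩ := ((eventually_ge_atTop M).and hFlt).exists
    exact ⟨Y, h1, h2⟩
  have hne : ∀ n, {y : ℝ | q n ≤ F y}.Nonempty := fun n =>
    (hF1.eventually (eventually_ge_nhds (hq n).2)).exists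
  -- Q tends to infinity
  have hQtop : Tendsto Q atTop atTop := by
    rw [tendsto_atTop]
    intro M
    obtain ⟨Y, hYM, hY1⟩ := hexY M
    filter_upwards [hq1.eventually (eventually_gt_nhds hY1)] with n hn
    have hle : ∀ z ∈ {y : ℝ | q n ≤ F y}, Y ≤ z := by
      intro z hz
      by_contra h
      push_neg at h
      have h2 := hmono h.le
      have : q n ≤ F z := hz
      linarith
    calc M ≤ Y := hYM
      _ ≤ Q n := le_csInf (hne n) hle
  have hbdd : ∀ᶠ n in atTop, BddBelow {y : ℝ | q n ≤ F y} := by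
    obtain ⟨Y, _, hY1⟩ := hexY 0
    filter_upwards [hq1.eventually (eventually_gt_nhds hY1)] with n hn
    refine ⟨Y, fun z hz => ?_⟩
    by_contra h
    push_neg at h
    have h2 := hmono h.le
    have : q n ≤ F z := hz
    linarith
  -- F(Q n) ≥ q n
  have hFQ : ∀ᶠ n in atTop, q n ≤ F (Q n) := by
    filter_upwards [hbdd] with n hb
    by_contra h
    push_neg at h
    have hev : ∀ᶠ y in nhdsWithin (Q n) (Set.Ici (Q n)), F y < q n :=
      (hrc (Q n)).eventually (eventually_lt_nhds h)
    obtain ⟨w, hw, hsub⟩ := mem_nhdsGE_iff_exists_Ico_subset.mp hev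
    have hlb : ∀ z ∈ {y : ℝ | q n ≤ F y}, w ≤ z := by
      intro z hz
      by_contra hzw
      push_neg at hzw
      rcases lt_or_ge z (Q n) with h1 | h1
      · exact absurd (csInf_le hb hz) (not_le.mpr h1)
      · have hzlt : F z < q n := hsub ⟨h1, hzw⟩
        have hzge : q n ≤ F z := hz
        linarith
    exact absurd (le_csInf (hne n) hlb) (not_le.mpr hw)
  -- lower bound on A n := Q n ^ α * (1 - q n) / c
  have hlow : ∀ᶠ n in atTop, u (Q n) ≤ Q n ^ α * (1 - q n) / c := by
    filter_upwards [hFQ, hQtop.eventually_ge_atTop (max y₀ 1)] with n h1 h2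
    have hQy : y₀ ≤ Q n := le_trans (le_max_left _ _) h2
    have hQ0 : (0:ℝ) < Q n := lt_of_lt_of_le one_pos (le_trans (le_max_right _ _) h2)
    have heq := hFu (Q n) hQy
    have hle : c * (Q n ^ α)⁻¹ * u (Q n) ≤ 1 - q n := by
      rw [← Real.rpow_neg hQ0.le, ← heq]; linarith
    have hQα : (0:ℝ) < Q n ^ α := rpow_pos_of_pos hQ0 α
    rw [le_div_iff₀ hc]
    calc u (Q n) * c = (c * (Q n ^ α)⁻¹ * u (Q n)) * Q n ^ α := by
          field_simp
      _ ≤ (1 - q n) * Q n ^ α := mul_le_mul_of_nonneg_right hle hQα.le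
      _ = Q n ^ α * (1 - q n) := mul_comm _ _
  -- A n → 1
  have hA1 : Tendsto (fun n => Q n ^ α * (1 - q n) / c) atTop (nhds 1) := by
    rw [Metric.tendsto_nhds]
    intro ε hε
    have h1ε : (1:ℝ) < 1 + ε := by linarith
    have h0ε : (0:ℝ) < 1 + ε := by linarith
    set b : ℝ := (1 + ε) ^ ((1:ℝ)/2) with hbdef
    have hb1 : 1 < b := by
      have := Real.rpow_lt_rpow (by norm_num : (0:ℝ) ≤ 1) h1ε (by norm_num : (0:ℝ) < 1/2)
      simpa [hbdef] using this
    have hbb : b * b = 1 + ε := by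
      rw [hbdef, ← Real.rpow_add h0ε]
      norm_num
    set θ : ℝ := (1 + ε) ^ (-(1/(2*α))) with hθdef
    have hθ0 : 0 < θ := rpow_pos_of_pos h0ε _
    have hθ1 : θ < 1 := by
      apply Real.rpow_lt_one_of_one_lt_of_neg h1ε
      have : 0 < 1/(2*α) := by positivity
      linarith
    have hθα : θ ^ (-α) = b := by
      rw [hθdef, hbdef, ← Real.rpow_mul h0ε.le]
      congr 1
      field_simp
    have hθQ : Tendsto (fun n => θ * Q n) atTop atTop := hQtop.const_mul_atTop hθ0
    have hub : ∀ᶠ n in atTop, Q n ^ α * (1 - q n) / c < 1 + ε := by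
      filter_upwards [hbdd, hQtop.eventually_ge_atTop (max y₀ 1),
        hθQ.eventually_ge_atTop y₀,
        (hu1.comp hθQ).eventually (eventually_lt_nhds hb1)] with n hb' hQ2 hθy huθ
      have hQ0 : (0:ℝ) < Q n := lt_of_lt_of_le one_pos (le_trans (le_max_right _ _) hQ2)
      have hlt : θ * Q n < Q n := by nlinarith
      have hFθ : F (θ * Q n) < q n := by
        by_contra h
        push_neg at h
        have : Q n ≤ θ * Q n := csInf_le hb' h
        linarith
      have heq := hFu (θ * Q n) hθy
      have hsn : 1 - q n < c * (θ * Q n) ^ (-α) * u (θ * Q n) := by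
        rw [← heq]; linarith
      have hsplit : (θ * Q n) ^ (-α) = θ ^ (-α) * Q n ^ (-α) :=
        Real.mul_rpow hθ0.le hQ0.le
      have hQα : (0:ℝ) < Q n ^ α := rpow_pos_of_pos hQ0 α
      have hQinv : Q n ^ (-α) * Q n ^ α = 1 := by
        rw [Real.rpow_neg hQ0.le]
        field_simp
      have key : Q n ^ α * (1 - q n) / c < b * u (θ * Q n) := by
        rw [div_lt_iff₀ hc]
        calc Q n ^ α * (1 - q n)
            < Q n ^ α * (c * (θ * Q n) ^ (-α) * u (θ * Q n)) :=
              mul_lt_mul_of_pos_left hsn hQα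
          _ = b * u (θ * Q n) * c := by
              rw [hsplit, hθα]
              linear_combination (c * b * u (θ * Q n)) * hQinv
      have hub2 : u (θ * Q n) < b := huθ
      have hbpos : (0:ℝ) < b := lt_trans one_pos hb1
      calc Q n ^ α * (1 - q n) / c < b * u (θ * Q n) := key
        _ ≤ b * b := by nlinarith
        _ = 1 + ε := hbb
    have hlb2 : ∀ᶠ n in atTop, 1 - ε < Q n ^ α * (1 - q n) / c := by
      filter_upwards [hlow,
        (hu1.comp hQtop).eventually (eventually_gt_nhds (by linarith : 1 - ε < (1:ℝ)))] with n h1 h2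
      have h2' : 1 - ε < u (Q n) := h2
      exact lt_of_lt_of_le h2' h1
    filter_upwards [hub, hlb2] with n h1 h2
    rw [Real.dist_eq, abs_sub_lt_iff]
    constructor <;> linarith
  -- final assembly
  have hg : Tendsto (fun n => u (t n) ^ (1/α) / (Q n ^ α * (1 - q n) / c) ^ (1/α))
      atTop (nhds 1) := by
    have h1 : Tendsto (fun n => u (t n) ^ (1/α)) atTop (nhds 1) := by
      have := (hu1.comp ht).rpow_const (p := 1/α) (Or.inl one_ne_zero)
      simpa using this
    have h2 : Tendsto (fun n => (Q n ^ α * (1 - q n) / c) ^ (1/α)) atTop (nhds 1) := by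
      have := hA1.rpow_const (p := 1/α) (Or.inl one_ne_zero)
      simpa using this
    simpa [Pi.div_def] using h1.div h2 one_ne_zero
  apply hg.congr'
  filter_upwards [ht.eventually_ge_atTop y₀, ht.eventually_gt_atTop 0,
    (hu1.comp ht).eventually (eventually_gt_nhds one_pos),
    hQtop.eventually_ge_atTop (max y₀ 1)] with n hty ht0 hut hQ2
  have hQ0 : (0:ℝ) < Q n := lt_of_lt_of_le one_pos (le_trans (le_max_right _ _) hQ2)
  have hsn := hs_pos n
  have hut' : (0:ℝ) < u (t n) := hut
  show u (t n) ^ (1/α) / (Q n ^ α * (1 - q n) / c) ^ (1/α)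
      = t n * ((1 - F (t n)) / (1 - q n)) ^ (1/α) / Q n
  have e1 : (1 - F (t n)) / (1 - q n) = t n ^ (-α) * (c * u (t n) / (1 - q n)) := by
    rw [hFu _ hty]; ring
  have e2 : (t n ^ (-α)) ^ ((1:ℝ)/α) = (t n)⁻¹ := by
    rw [← Real.rpow_mul ht0.le]
    have hexp : -α * (1/α) = -1 := by field_simp
    rw [hexp, Real.rpow_neg_one]
  have e3 : (Q n ^ α * (1 - q n) / c) ^ ((1:ℝ)/α) = Q n * ((1 - q n)/c) ^ ((1:ℝ)/α) := by
    rw [show Q n ^ α * (1 - q n)/c = Q n ^ α * ((1 - q n)/c) by ring,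
      Real.mul_rpow (rpow_pos_of_pos hQ0 α).le (by positivity),
      ← Real.rpow_mul hQ0.le]
    have hexp : α * (1/α) = 1 := by field_simp
    rw [hexp, Real.rpow_one]
  have e4 : (c * u (t n) / (1 - q n)) ^ ((1:ℝ)/α)
      = u (t n) ^ ((1:ℝ)/α) * (((1 - q n)/c) ^ ((1:ℝ)/α))⁻¹ := by
    rw [show c * u (t n) / (1 - q n) = u (t n) * ((1 - q n)/c)⁻¹ by
      field_simp]
    rw [Real.mul_rpow hut'.le (by positivity), Real.inv_rpow (by positivity)]
  have hX : (0:ℝ) < ((1 - q n)/c) ^ ((1:ℝ)/α) := rpow_pos_of_pos (by positivity) _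
  rw [e1, Real.mul_rpow (rpow_pos_of_pos ht0 (-α)).le (by positivity), e2, e3, e4]
  field_simp
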